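/- Let A and B be unital *-algebras over ℂ, Θ : A ⊗ B → A ⊗ B a unital *-algebra homomorphism, and σ a state on B. If B̂ ∈ B is an effect in the sense that both B̂ and 1 − B̂ are sums of squares in B, then the induced observable ε_σ(B̂) = η_σ(Θ(1 ⊗ B̂)) is an effect in A: both ε_σ(B̂) and 1 − ε_σ(B̂) are sums of squares in A. -/

import Mathlib

open scoped TensorProduct

noncomputable section

/-- A linear functional on a unital *-algebra over ℂ is *positive* if it takes
nonnegative real values on elements of the form `star x * x`. -/
def IsPositiveLF {A : Type} [Ring A] [Algebra ℂ A] [StarRing A] (φ : A →ₗ[ℂ] ℂ) : Prop :=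
  ∀ x : A, ∃ r : ℝ, 0 ≤ r ∧ φ (star x * x) = (r : ℂ)

/-- A *state* on a unital *-algebra over ℂ: a positive, normalised linear functional
compatible with the star operation. -/
def IsState {A : Type} [Ring A] [Algebra ℂ A] [StarRing A] (φ : A →ₗ[ℂ] ℂ) : Prop :=
  IsPositiveLF φ ∧ φ 1 = 1 ∧ ∀ x : A, φ (star x) = starRingEnd ℂ (φ x)

/-- An element of a *-algebra is a *sum of squares* if it is a finite sum of
elements of the form `star c * c`. -/
def IsSumOfStarSquares {A : Type} [Ring A] [StarRing A] (a : A) : Prop :=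
  ∃ (n : ℕ) (c : Fin n → A), a = ∑ i, star (c i) * c i

/-- The product functional `ω ⊗ σ`, determined by `(ω ⊗ σ)(a ⊗ b) = ω(a) * σ(b)`. -/
def prodLF {A B : Type} [AddCommGroup A] [Module ℂ A] [AddCommGroup B] [Module ℂ B]
    (ω : A →ₗ[ℂ] ℂ) (σ : B →ₗ[ℂ] ℂ) : A ⊗[ℂ] B →ₗ[ℂ] ℂ :=
  (TensorProduct.lid ℂ ℂ).toLinearMap ∘ₗ TensorProduct.map ω σ

lemma prodLF_tmul {A B : Type} [AddCommGroup A] [Module ℂ A] [AddCommGroup B] [Module ℂ B]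
    (ω : A →ₗ[ℂ] ℂ) (σ : B →ₗ[ℂ] ℂ) (a : A) (b : B) :
    prodLF ω σ (a ⊗ₜ[ℂ] b) = ω a * σ b := by
  simp [prodLF, smul_eq_mul, mul_comm]

/-- The slice map `η_σ : A ⊗ B → A`, determined by `η_σ(a ⊗ b) = σ(b) • a`. -/
def sliceLF {A B : Type} [AddCommGroup A] [Module ℂ A] [AddCommGroup B] [Module ℂ B]
    (σ : B →ₗ[ℂ] ℂ) : A ⊗[ℂ] B →ₗ[ℂ] A :=
  (TensorProduct.rid ℂ A).toLinearMap ∘ₗ TensorProduct.map LinearMap.id σ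

lemma sliceLF_tmul {A B : Type} [AddCommGroup A] [Module ℂ A] [AddCommGroup B] [Module ℂ B]
    (σ : B →ₗ[ℂ] ℂ) (a : A) (b : B) : sliceLF σ (a ⊗ₜ[ℂ] b) = σ b • a := by
  simp [sliceLF]

/-- The star operation on the algebraic tensor product `A ⊗[ℂ] B`, determined by
`star (a ⊗ b) = star a ⊗ star b` (it is additive). -/
def tensorStar {A B : Type} [AddCommGroup A] [Module ℂ A] [StarAddMonoid A] [StarModule ℂ A]
    [AddCommGroup B] [Module ℂ B] [StarAddMonoid B] [StarModule ℂ B] :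
    A ⊗[ℂ] B →+ A ⊗[ℂ] B :=
  TensorProduct.liftAddHom
    { toFun := fun a =>
        { toFun := fun b => star a ⊗ₜ[ℂ] star b
          map_zero' := by simp
          map_add' := fun b b' => by simp [star_add, TensorProduct.tmul_add] }
      map_zero' := by ext b; simp
      map_add' := fun a a' => by ext b; simp [star_add, TensorProduct.add_tmul] }
    (fun c a b => by
      simp only [AddMonoidHom.coe_mk, ZeroHom.coe_mk, star_smul, starRingEnd_apply,
        TensorProduct.smul_tmul, TensorProduct.smul_tmul'])

@[simp] lemma tensorStar_tmul {A B : Type} [AddCommGroup A] [Module ℂ A] [StarAddMonoid A]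
    [StarModule ℂ A] [AddCommGroup B] [Module ℂ B] [StarAddMonoid B] [StarModule ℂ B]
    (a : A) (b : B) : tensorStar (a ⊗ₜ[ℂ] b) = star a ⊗ₜ[ℂ] star b := rfl

/-- The pre-instrument `ℐ_σ(B̂)` associated to a coupling map `Θ`: it sends the
functional `ω` to the functional `a ↦ (ω ⊗ σ)(Θ(a ⊗ B̂))`. -/
def preInstrument {A B : Type} [Ring A] [Algebra ℂ A] [Ring B] [Algebra ℂ B]
    (Θ : A ⊗[ℂ] B →ₗ[ℂ] A ⊗[ℂ] B) (σ : B →ₗ[ℂ] ℂ) (Bhat : B)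
    (ω : A →ₗ[ℂ] ℂ) : A →ₗ[ℂ] ℂ :=
  prodLF ω σ ∘ₗ Θ ∘ₗ (TensorProduct.mk ℂ A B).flip Bhat

variable {A B : Type}
  [Ring A] [Algebra ℂ A] [StarRing A] [StarModule ℂ A]
  [Ring B] [Algebra ℂ B] [StarRing B] [StarModule ℂ B]

set_option linter.unusedSectionVars false

lemma sos_zero : IsSumOfStarSquares (0 : A) := ⟨0, fun _ => 0, by simp⟩

lemma sos_add {p q : A} (hp : IsSumOfStarSquares p) (hq : IsSumOfStarSquares q) :
    IsSumOfStarSquares (p + q) := by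
  obtain ⟨n, c, rfl⟩ := hp
  obtain ⟨m, d, rfl⟩ := hq
  exact ⟨n + m, Fin.append c d, by rw [Fin.sum_univ_add]; simp⟩

lemma sos_fintype {ι : Type} [Fintype ι] (d : ι → A) :
    IsSumOfStarSquares (∑ i, star (d i) * d i) :=
  ⟨Fintype.card ι, fun k => d ((Fintype.equivFin ι).symm k),
    (Equiv.sum_comp (Fintype.equivFin ι).symm fun i => star (d i) * d i).symm⟩

open ComplexOrder Matrix in
lemma slice_sq (σ : B →ₗ[ℂ] ℂ) (hσ : IsState σ) (c : A ⊗[ℂ] B) :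
    IsSumOfStarSquares (sliceLF σ (tensorStar c * c)) := by
  classical
  obtain ⟨S, rfl⟩ := TensorProduct.exists_finset c
  rw [← Finset.sum_attach S fun p => p.1 ⊗ₜ[ℂ] p.2, ← Finset.univ_eq_attach]
  set ι := {x // x ∈ S}
  set a : ι → A := fun p => p.1.1 with ha
  set b : ι → B := fun p => p.1.2 with hb
  set M : Matrix ι ι ℂ := fun i j => σ (star (b i) * b j) with hM
  have hstar : tensorStar (∑ i : ι, a i ⊗ₜ[ℂ] b i) = ∑ i : ι, star (a i) ⊗ₜ[ℂ] star (b i) := by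
    rw [map_sum]
    exact Finset.sum_congr rfl fun i _ => tensorStar_tmul _ _
  have hprod : tensorStar (∑ i : ι, a i ⊗ₜ[ℂ] b i) * (∑ i : ι, a i ⊗ₜ[ℂ] b i)
      = ∑ i : ι, ∑ j : ι, (star (a i) * a j) ⊗ₜ[ℂ] (star (b i) * b j) := by
    rw [hstar, Finset.sum_mul_sum]
    simp [Algebra.TensorProduct.tmul_mul_tmul]
  have hslice : sliceLF σ (tensorStar (∑ i : ι, a i ⊗ₜ[ℂ] b i) * (∑ i : ι, a i ⊗ₜ[ℂ] b i))
      = ∑ i : ι, ∑ j : ι, M i j • (star (a i) * a j) := by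
    rw [hprod, map_sum]
    simp [sliceLF_tmul, hM]
  rw [hslice]
  have hMpsd : M.PosSemidef := by
    refine Matrix.PosSemidef.of_dotProduct_mulVec_nonneg ?_ ?_
    · ext i j
      simp only [Matrix.conjTranspose_apply]
      simp only [hM]
      rw [Complex.star_def, ← hσ.2.2, StarMul.star_mul, star_star]
    · intro x
      have key : dotProduct (star x) (M *ᵥ x)
          = σ (star (∑ j, x j • b j) * (∑ j, x j • b j)) := by
        rw [star_sum, Finset.sum_mul_sum]
        simp only [star_smul, smul_mul_assoc, mul_smul_comm, map_sum, _root_.map_smul,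
          smul_smul, smul_eq_mul, dotProduct, Matrix.mulVec, Pi.star_apply, Finset.mul_sum, hM]
        exact Finset.sum_congr rfl fun i _ => Finset.sum_congr rfl fun j _ => by ring
      obtain ⟨r, hr, hval⟩ := hσ.1 (∑ j, x j • b j)
      rw [key, hval]
      exact Complex.zero_le_real.mpr hr
  obtain ⟨N, hN⟩ : ∃ N : Matrix ι ι ℂ, M = Nᴴ * N := by
    open scoped MatrixOrder Matrix.Norms.L2Operator in
    obtain ⟨N, hN⟩ := CStarAlgebra.nonneg_iff_eq_star_mul_self.mp hMpsd.nonneg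
    exact ⟨N, hN⟩
  have hd : ∑ k : ι, star (∑ j, N k j • a j) * (∑ j, N k j • a j)
      = ∑ i : ι, ∑ j : ι, M i j • (star (a i) * a j) := by
    have hMij : ∀ i j, M i j = ∑ k : ι, star (N k i) * N k j := by
      intro i j
      rw [hN]
      simp only [Matrix.mul_apply, Matrix.conjTranspose_apply]
    simp only [star_sum, star_smul, Finset.sum_mul_sum, smul_mul_assoc, mul_smul_comm,
      smul_smul]
    rw [Finset.sum_comm]
    refine Finset.sum_congr rfl fun i _ => ?_
    rw [Finset.sum_comm]
    refine Finset.sum_congr rfl fun j _ => ?_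
    rw [hMij i j, Finset.sum_smul]
    exact Finset.sum_congr rfl fun k _ => by rw [mul_comm (N k j)]
  rw [← hd]
  exact sos_fintype _

lemma slice_theta_sos (Θ : A ⊗[ℂ] B →ₐ[ℂ] A ⊗[ℂ] B)
    (hΘstar : ∀ x : A ⊗[ℂ] B, Θ (tensorStar x) = tensorStar (Θ x))
    (σ : B →ₗ[ℂ] ℂ) (hσ : IsState σ) {x : B} (hx : IsSumOfStarSquares x) :
    IsSumOfStarSquares (sliceLF σ (Θ ((1 : A) ⊗ₜ[ℂ] x))) := by
  obtain ⟨n, c, rfl⟩ := hx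
  have h1 : (1 : A) ⊗ₜ[ℂ] (∑ i, star (c i) * c i)
      = ∑ i, tensorStar ((1 : A) ⊗ₜ[ℂ] c i) * ((1 : A) ⊗ₜ[ℂ] c i) := by
    rw [TensorProduct.tmul_sum]
    refine Finset.sum_congr rfl fun i _ => ?_
    simp [Algebra.TensorProduct.tmul_mul_tmul]
  rw [h1, map_sum, map_sum]
  have h2 : ∀ i : Fin n, sliceLF σ (Θ (tensorStar ((1 : A) ⊗ₜ[ℂ] c i) * ((1 : A) ⊗ₜ[ℂ] c i)))
      = sliceLF σ (tensorStar (Θ ((1 : A) ⊗ₜ[ℂ] c i)) * Θ ((1 : A) ⊗ₜ[ℂ] c i)) := by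
    intro i
    rw [map_mul, hΘstar]
  refine Finset.sum_induction _ IsSumOfStarSquares (fun _ _ => sos_add) sos_zero ?_
  intro i _
  rw [h2 i]
  exact slice_sq σ hσ _

/-- if `B̂` is an effect in `B` (both `B̂` and `1 − B̂` are sums of
squares), then the induced observable `ε_σ(B̂)` is an effect in `A`. -/
theorem induced_observable_effect
    (Θ : A ⊗[ℂ] B →ₐ[ℂ] A ⊗[ℂ] B)
    (hΘstar : ∀ x : A ⊗[ℂ] B, Θ (tensorStar x) = tensorStar (Θ x))
    (σ : B →ₗ[ℂ] ℂ) (hσ : IsState σ) (Bhat : B)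
    (hB : IsSumOfStarSquares Bhat) (hB' : IsSumOfStarSquares (1 - Bhat)) :
    IsSumOfStarSquares (sliceLF σ (Θ ((1 : A) ⊗ₜ[ℂ] Bhat))) ∧
      IsSumOfStarSquares (1 - sliceLF σ (Θ ((1 : A) ⊗ₜ[ℂ] Bhat))) := by
  refine ⟨slice_theta_sos Θ hΘstar σ hσ hB, ?_⟩
  have h1 : (1 : A) ⊗ₜ[ℂ] (1 - Bhat) = 1 - (1 : A) ⊗ₜ[ℂ] Bhat := by
    rw [TensorProduct.tmul_sub, ← Algebra.TensorProduct.one_def]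
  have h2 : sliceLF σ (Θ ((1 : A) ⊗ₜ[ℂ] (1 - Bhat)))
      = 1 - sliceLF σ (Θ ((1 : A) ⊗ₜ[ℂ] Bhat)) := by
    rw [h1, map_sub, map_one, map_sub]
    congr 1
    rw [Algebra.TensorProduct.one_def, sliceLF_tmul, hσ.2.1, one_smul]
  rw [← h2]
  exact slice_theta_sos Θ hΘstar σ hσ hB'
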